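/- Let r ≥ 2 and Δ ≥ 2 be integers and let α ≥ 1 and c > 0 be reals with αr ≥ 2. For a real x ≥ 1, let t_x = min{t ∈ ℕ₀ : (x/2)^(2^(−t)) ≤ 2}. Let R : [1, ∞) → ℝ be any function satisfying R(L) ≤ c·r² + c·log₂ Δ for all 1 ≤ L ≤ 4, and R(L) ≤ αr · R(√(2L)) + c·r for all L > 4. Then for every L ≥ 1, R(L) ≤ (αr)^(t_L) · (c·r² + c·log₂ Δ) + c·r · Σ_{i=0}^{t_L − 1} (αr)^i, and in particular R(L) < 2·(αr)^(t_L) · (c·r² + c·log₂ Δ). -/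

import Mathlib

open Finset Real

/-- The set defining `t x` is nonempty. -/
lemma aux_set_nonempty (x : ℝ) (hx : 1 ≤ x) :
    {s : ℕ | (x / 2) ^ (((2 : ℝ) ^ s)⁻¹) ≤ 2}.Nonempty := by
  obtain ⟨n, hn⟩ := exists_nat_ge x
  refine ⟨n, ?_⟩
  have h2n : (n : ℝ) < 2 ^ n := by exact_mod_cast Nat.lt_two_pow_self (n := n)
  have hpow : (2 : ℝ) ^ n ≤ 2 ^ (2 ^ n : ℕ) := by
    apply pow_le_pow_right₀ (by norm_num)
    exact (Nat.lt_two_pow_self (n := n)).le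
  have hx2 : x / 2 ≤ (2 : ℝ) ^ (2 ^ n : ℕ) := by
    have : x / 2 ≤ x := by linarith
    linarith
  have he : (0:ℝ) ≤ ((2 : ℝ) ^ n)⁻¹ := by positivity
  calc (x / 2) ^ (((2 : ℝ) ^ n)⁻¹)
      ≤ ((2 : ℝ) ^ (2 ^ n : ℕ)) ^ (((2 : ℝ) ^ n)⁻¹) := by
        apply Real.rpow_le_rpow (by linarith) hx2 he
    _ = 2 := by
        rw [← Real.rpow_natCast 2 (2^n), ← Real.rpow_mul (by norm_num)]
        have h : ((2^n : ℕ) : ℝ) * ((2 : ℝ) ^ n)⁻¹ = 1 := by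
          push_cast
          field_simp
        rw [h, Real.rpow_one]

lemma aux_zero_mem (x : ℝ) (hx4 : x ≤ 4) :
    (0:ℕ) ∈ {s : ℕ | (x / 2) ^ (((2 : ℝ) ^ s)⁻¹) ≤ 2} := by
  simp only [Set.mem_setOf_eq, pow_zero, inv_one, Real.rpow_one]
  linarith

lemma aux_sInf_base (x : ℝ) (hx4 : x ≤ 4) :
    sInf {s : ℕ | (x / 2) ^ (((2 : ℝ) ^ s)⁻¹) ≤ 2} = 0 :=
  Nat.le_zero.mp (Nat.sInf_le (aux_zero_mem x hx4))

lemma aux_mem_iff (x : ℝ) (hx : 4 < x) (s : ℕ) :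
    (x / 2) ^ (((2 : ℝ) ^ (s+1))⁻¹) ≤ 2 ↔
    (Real.sqrt (2 * x) / 2) ^ (((2 : ℝ) ^ s)⁻¹) ≤ 2 := by
  have hx2 : (0:ℝ) < x / 2 := by linarith
  have h1 : Real.sqrt (2 * x) / 2 = Real.sqrt (x / 2) := by
    rw [show (2:ℝ) * x = (x/2) * 4 by ring, Real.sqrt_mul (le_of_lt hx2),
      show (4:ℝ) = 2^2 by norm_num, Real.sqrt_sq (by norm_num)]
    ring
  have h2 : Real.sqrt (x/2) = (x/2) ^ (1/2 : ℝ) := Real.sqrt_eq_rpow _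
  have h3 : ((x/2) ^ (1/2 : ℝ)) ^ (((2 : ℝ) ^ s)⁻¹) = (x/2) ^ (((2 : ℝ) ^ (s+1))⁻¹) := by
    rw [← Real.rpow_mul (le_of_lt hx2)]
    congr 1
    rw [pow_succ]
    field_simp
  rw [h1, h2, h3]

lemma aux_sInf_step (x : ℝ) (hx : 4 < x) :
    sInf {s : ℕ | (x / 2) ^ (((2 : ℝ) ^ s)⁻¹) ≤ 2} =
    sInf {s : ℕ | (Real.sqrt (2 * x) / 2) ^ (((2 : ℝ) ^ s)⁻¹) ≤ 2} + 1 := by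
  set S := {s : ℕ | (x / 2) ^ (((2 : ℝ) ^ s)⁻¹) ≤ 2} with hS
  set S' := {s : ℕ | (Real.sqrt (2 * x) / 2) ^ (((2 : ℝ) ^ s)⁻¹) ≤ 2} with hS'
  have hsx : 1 ≤ Real.sqrt (2 * x) := by
    rw [show (1:ℝ) = Real.sqrt 1 by simp]
    exact Real.sqrt_le_sqrt (by linarith)
  have hS'ne : S'.Nonempty := aux_set_nonempty _ hsx
  set n := sInf S' with hn
  have hnmem : n ∈ S' := Nat.sInf_mem hS'ne
  have hmem : n + 1 ∈ S := (aux_mem_iff x hx n).mpr hnmem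
  have h0 : (0:ℕ) ∉ S := by
    simp only [hS, Set.mem_setOf_eq, pow_zero, inv_one, Real.rpow_one]
    push_neg
    linarith
  refine le_antisymm (Nat.sInf_le hmem) ?_
  refine le_csInf ⟨n+1, hmem⟩ ?_
  intro m hm
  match m with
  | 0 => exact absurd hm h0
  | k + 1 =>
    have hk : k ∈ S' := (aux_mem_iff x hx k).mp hm
    exact Nat.succ_le_succ (Nat.sInf_le hk)

theorem recurrence_solution
    (r Δ : ℕ) (hr : 2 ≤ r) (hΔ : 2 ≤ Δ)
    (α c : ℝ) (hα : 1 ≤ α) (hc : 0 < c) (hαr : 2 ≤ α * r)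
    (t : ℝ → ℕ)
    (ht : ∀ x : ℝ, 1 ≤ x →
      t x = sInf {s : ℕ | (x / 2) ^ (((2 : ℝ) ^ s)⁻¹) ≤ 2})
    (R : ℝ → ℝ)
    (hbase : ∀ L : ℝ, 1 ≤ L → L ≤ 4 → R L ≤ c * r ^ 2 + c * Real.logb 2 Δ)
    (hrec : ∀ L : ℝ, 4 < L → R L ≤ α * r * R (Real.sqrt (2 * L)) + c * r) :
    ∀ L : ℝ, 1 ≤ L →
      R L ≤ (α * r) ^ (t L) * (c * r ^ 2 + c * Real.logb 2 Δ) +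
          c * r * ∑ i ∈ Finset.range (t L), (α * r) ^ i ∧
      R L < 2 * (α * r) ^ (t L) * (c * r ^ 2 + c * Real.logb 2 Δ) := by
  set q := α * r with hqdef
  set B := c * r ^ 2 + c * Real.logb 2 Δ with hBdef
  have hq2 : (2:ℝ) ≤ q := hαr
  have hq0 : (0:ℝ) ≤ q := by linarith
  have hlogb : (1:ℝ) ≤ Real.logb 2 Δ := by
    have : Real.logb 2 2 ≤ Real.logb 2 Δ := by
      apply Real.logb_le_logb_of_le (by norm_num) (by norm_num)
      exact_mod_cast hΔ
    simpa using this
  have hr2 : (2:ℝ) ≤ (r:ℝ) := by exact_mod_cast hr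
  have hB : c * r ^ 2 < B := by nlinarith
  have hcr : (0:ℝ) < c * r := by positivity
  have key : ∀ n : ℕ, ∀ L : ℝ, 1 ≤ L → t L = n →
      R L ≤ q ^ n * B + c * r * ∑ i ∈ Finset.range n, q ^ i := by
    intro n
    induction n with
    | zero =>
      intro L hL htL
      by_cases h4 : L ≤ 4
      · simpa using hbase L hL h4
      · exfalso
        rw [ht L hL, aux_sInf_step L (not_le.mp h4)] at htL
        exact Nat.succ_ne_zero _ htL
    | succ n ih =>
      intro L hL htL
      have h4 : 4 < L := by
        by_contra h
        rw [ht L hL, aux_sInf_base L (not_lt.mp h)] at htL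
        exact Nat.succ_ne_zero _ htL.symm
      set L' := Real.sqrt (2 * L) with hL'def
      have hL'1 : 1 ≤ L' := by
        rw [hL'def, show (1:ℝ) = Real.sqrt 1 by simp]
        exact Real.sqrt_le_sqrt (by linarith)
      have htL' : t L' = n := by
        have h1 : t L = t L' + 1 := by
          rw [ht L hL, ht L' hL'1, aux_sInf_step L h4]
        omega
      have hR' := ih L' hL'1 htL'
      have hstep := hrec L h4
      have hmul : q * R L' ≤ q * (q ^ n * B + c * r * ∑ i ∈ Finset.range n, q ^ i) :=
        mul_le_mul_of_nonneg_left hR' hq0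
      have hgeo : ∑ i ∈ Finset.range (n+1), q ^ i = q * (∑ i ∈ Finset.range n, q ^ i) + 1 :=
        geom_sum_succ
      calc R L ≤ q * R L' + c * r := hstep
        _ ≤ q * (q ^ n * B + c * r * ∑ i ∈ Finset.range n, q ^ i) + c * r := by linarith
        _ = q ^ (n+1) * B + c * r * ∑ i ∈ Finset.range (n+1), q ^ i := by
            rw [hgeo]; ring
  intro L hL
  have h1 := key (t L) L hL rfl
  refine ⟨h1, ?_⟩
  have hgm : (∑ i ∈ Finset.range (t L), q ^ i) * (q - 1) = q ^ (t L) - 1 := geom_sum_mul q (t L)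
  have hsum0 : (0:ℝ) ≤ ∑ i ∈ Finset.range (t L), q ^ i :=
    Finset.sum_nonneg fun i _ => pow_nonneg hq0 i
  have hsum : ∑ i ∈ Finset.range (t L), q ^ i ≤ q ^ (t L) - 1 := by nlinarith
  have hqt : (1:ℝ) ≤ q ^ (t L) := one_le_pow₀ (by linarith)
  have h5 : c * (r:ℝ) ≤ c * (r:ℝ) ^ 2 := by nlinarith
  have h6 : (0:ℝ) < q ^ (t L) := by positivity
  nlinarith [mul_le_mul_of_nonneg_left hsum (le_of_lt hcr),
    mul_lt_mul_of_pos_right hB h6,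
    mul_le_mul_of_nonneg_right h5 (by linarith : (0:ℝ) ≤ q ^ (t L) - 1)]
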